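/- arXiv:0704.0164 — 5 statements merged into one kernel-verified Lean document; each statement's English description precedes it below -/
import Mathlib

section
/- Let n ≥ 3 and let A be an invertible real n×n matrix such that for every x ∈ ℝⁿ and all indices i, j, k one has (Ax)_i·(A_{kj} − A_{jk}) + (Ax)_j·(A_{ik} − A_{ki}) + (Ax)_k·(A_{ji} − A_{ij}) = 0. Then A is symmetric, i.e. Aᵀ = A. -/
open Matrix

/-- If `A` is an invertible real `n × n` matrix (`n ≥ 3`) satisfying the
coordinate form of the Frobenius integrability condition for the linear one-form
`ω₁ = Σ A_{ij} x_j dx_i`, then `A` is symmetric. -/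
theorem integrable_linear_one_form_symmetric
    (n : ℕ) (hn : 3 ≤ n) (A : Matrix (Fin n) (Fin n) ℝ) (hA : IsUnit A.det)
    (hint : ∀ (x : Fin n → ℝ) (i j k : Fin n),
      A.mulVec x i * (A k j - A j k) + A.mulVec x j * (A i k - A k i) +
        A.mulVec x k * (A j i - A i j) = 0) :
    Aᵀ = A := by
  ext j k
  simp only [transpose_apply]
  rcases eq_or_ne j k with rfl | hjk
  · rfl
  -- pick i distinct from j and k
  obtain ⟨i, hij, hik⟩ : ∃ i : Fin n, i ≠ j ∧ i ≠ k := by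
    by_contra h
    push_neg at h
    have hsub : (Finset.univ : Finset (Fin n)) ⊆ {j, k} := by
      intro i _
      rcases eq_or_ne i j with rfl | hij
      · simp
      · simp [h i hij]
    have := Finset.card_le_card hsub
    have h2 : ({j, k} : Finset (Fin n)).card ≤ 2 := Finset.card_insert_le _ _ |>.trans (by simp)
    simp only [Finset.card_univ, Fintype.card_fin] at this
    omega
  -- choose x with A.mulVec x = e_i
  set x := A⁻¹.mulVec (Pi.single i 1) with hxdef
  have hx : A.mulVec x = Pi.single i 1 := by
    rw [hxdef, Matrix.mulVec_mulVec, Matrix.mul_nonsing_inv A hA, Matrix.one_mulVec]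
  have h := hint x i j k
  rw [hx] at h
  simp [Pi.single_eq_of_ne hij.symm, Pi.single_eq_of_ne hik.symm, Pi.single_eq_same] at h
  linarith
end

section
/- Let h : ℝⁿ → ℝⁿ be a C¹ map with h(0) = 0, and suppose that for every x ∈ ℝⁿ and all indices i, j, k one has h_i(x)·(∂_j h_k(x) − ∂_k h_j(x)) + h_j(x)·(∂_k h_i(x) − ∂_i h_k(x)) + h_k(x)·(∂_i h_j(x) − ∂_j h_i(x)) = 0. Define the matrix A by A_{ij} = ∂_j h_i(0). Then for every x ∈ ℝⁿ and all i, j, k one has (Ax)_i·(A_{kj} − A_{jk}) + (Ax)_j·(A_{ik} − A_{ki}) + (Ax)_k·(A_{ji} − A_{ij}) = 0. -/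
open Topology Filter


/-- If `ω = Σ hᵢ dxⁱ` is a `C¹` one-form on `ℝⁿ` vanishing at `0` that
satisfies the coordinate form of the Frobenius integrability condition `ω ∧ dω = 0`,
then its linear part at `0`, given by the matrix `A_{ij} = ∂_j h_i(0)`, satisfies the
integrability condition of the linearized one-form `ω₁ = Σ A_{ij} x_j dx_i`. -/
theorem integrability_of_linear_part
    (n : ℕ) (h : (Fin n → ℝ) → (Fin n → ℝ))
    (hC1 : ContDiff ℝ 1 h) (h0 : h 0 = 0)
    (hint : ∀ (x : Fin n → ℝ) (i j k : Fin n),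
      h x i * (fderiv ℝ h x (Pi.single j 1) k - fderiv ℝ h x (Pi.single k 1) j) +
      h x j * (fderiv ℝ h x (Pi.single k 1) i - fderiv ℝ h x (Pi.single i 1) k) +
      h x k * (fderiv ℝ h x (Pi.single i 1) j - fderiv ℝ h x (Pi.single j 1) i) = 0)
    (A : Matrix (Fin n) (Fin n) ℝ)
    (hA : ∀ i j : Fin n, A i j = fderiv ℝ h 0 (Pi.single j 1) i) :
    ∀ (x : Fin n → ℝ) (i j k : Fin n),
      A.mulVec x i * (A k j - A j k) + A.mulVec x j * (A i k - A k i) +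
        A.mulVec x k * (A j i - A i j) = 0 := by
  intro x i j k
  set L := fderiv ℝ h 0 with hLdef
  have hdiff : Differentiable ℝ h := hC1.differentiable one_ne_zero
  have hx0 : (0:ℝ) • x = 0 := zero_smul ℝ x
  -- A.mulVec x m = L x m
  have hxsum : x = ∑ q : Fin n, x q • (Pi.single q 1 : Fin n → ℝ) := by
    conv_lhs => rw [← Finset.univ_sum_single x]
    refine Finset.sum_congr rfl fun q _ => ?_
    rw [← Pi.single_smul, smul_eq_mul, mul_one]
  have hAx : ∀ m, A.mulVec x m = L x m := by
    intro m
    have : L x = ∑ q : Fin n, x q • L (Pi.single q 1) := by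
      conv_lhs => rw [hxsum]
      rw [map_sum]
      exact Finset.sum_congr rfl fun q _ => by rw [map_smul]
    rw [this]
    simp only [Matrix.mulVec, dotProduct, Finset.sum_apply, Pi.smul_apply,
      smul_eq_mul]
    exact Finset.sum_congr rfl fun q _ => by rw [hA, mul_comm]
  -- derivative of t ↦ h (t • x) at 0
  have hderiv : HasDerivAt (fun t : ℝ => h (t • x)) (L x) 0 := by
    have h1 : HasDerivAt (fun t : ℝ => t • x) x 0 := by
      simpa using (hasDerivAt_id (0:ℝ)).smul_const x
    have h2 : HasFDerivAt h L ((0:ℝ) • x) := by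
      rw [hx0]; exact (hdiff 0).hasFDerivAt
    exact h2.comp_hasDerivAt 0 h1
  have hslope : Filter.Tendsto (fun t : ℝ => t⁻¹ • h (t • x)) (𝓝[≠] (0:ℝ)) (𝓝 (L x)) := by
    have := hasDerivAt_iff_tendsto_slope.mp hderiv
    have heq : slope (fun t : ℝ => h (t • x)) 0 = fun t : ℝ => t⁻¹ • h (t • x) := by
      funext t
      simp [slope, hx0, h0]
    rwa [heq] at this
  have hcomp : ∀ m, Filter.Tendsto (fun t : ℝ => h (t • x) m / t) (𝓝[≠] (0:ℝ))
      (𝓝 (L x m)) := by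
    intro m
    have := ((continuous_apply m).tendsto (L x)).comp hslope
    simpa [Function.comp_def, div_eq_inv_mul] using this
  -- continuity of the derivative
  have hcont : Continuous (fun y => fderiv ℝ h y) := hC1.continuous_fderiv one_ne_zero
  have hD : ∀ (p q : Fin n), Filter.Tendsto
      (fun t : ℝ => fderiv ℝ h (t • x) (Pi.single q 1) p) (𝓝[≠] (0:ℝ))
      (𝓝 (L (Pi.single q 1) p)) := by
    intro p q
    have hsm : Continuous (fun t : ℝ => t • x) := continuous_id.smul continuous_const
    have hc : Continuous (fun t : ℝ => fderiv ℝ h (t • x) (Pi.single q 1) p) :=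
      (continuous_apply p).comp ((hcont.comp hsm).clm_apply continuous_const)
    have := hc.continuousAt (x := (0:ℝ)).tendsto
    rw [hx0] at this
    exact this.mono_left nhdsWithin_le_nhds
  -- the combined limit
  have hG : Filter.Tendsto (fun t : ℝ =>
      h (t • x) i / t * (fderiv ℝ h (t • x) (Pi.single j 1) k
          - fderiv ℝ h (t • x) (Pi.single k 1) j) +
      h (t • x) j / t * (fderiv ℝ h (t • x) (Pi.single k 1) i
          - fderiv ℝ h (t • x) (Pi.single i 1) k) +
      h (t • x) k / t * (fderiv ℝ h (t • x) (Pi.single i 1) j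
          - fderiv ℝ h (t • x) (Pi.single j 1) i)) (𝓝[≠] (0:ℝ))
      (𝓝 (L x i * (L (Pi.single j 1) k - L (Pi.single k 1) j) +
          L x j * (L (Pi.single k 1) i - L (Pi.single i 1) k) +
          L x k * (L (Pi.single i 1) j - L (Pi.single j 1) i))) :=
    (((hcomp i).mul ((hD k j).sub (hD j k))).add
      ((hcomp j).mul ((hD i k).sub (hD k i)))).add
      ((hcomp k).mul ((hD j i).sub (hD i j)))
  have hzero : ∀ t : ℝ,
      h (t • x) i / t * (fderiv ℝ h (t • x) (Pi.single j 1) k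
          - fderiv ℝ h (t • x) (Pi.single k 1) j) +
      h (t • x) j / t * (fderiv ℝ h (t • x) (Pi.single k 1) i
          - fderiv ℝ h (t • x) (Pi.single i 1) k) +
      h (t • x) k / t * (fderiv ℝ h (t • x) (Pi.single i 1) j
          - fderiv ℝ h (t • x) (Pi.single j 1) i) = 0 := by
    intro t
    rw [div_mul_eq_mul_div, div_mul_eq_mul_div, div_mul_eq_mul_div,
      ← add_div, ← add_div, hint (t • x) i j k, zero_div]
  have hlim0 : Filter.Tendsto (fun _ : ℝ => (0:ℝ)) (𝓝[≠] (0:ℝ)) (𝓝 (0:ℝ)) :=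
    tendsto_const_nhds
  have hG0 := hG.congr (fun t => (hzero t))
  have key := tendsto_nhds_unique hG0 hlim0
  calc A.mulVec x i * (A k j - A j k) + A.mulVec x j * (A i k - A k i) +
        A.mulVec x k * (A j i - A i j)
      = L x i * (L (Pi.single j 1) k - L (Pi.single k 1) j) +
          L x j * (L (Pi.single k 1) i - L (Pi.single i 1) k) +
          L x k * (L (Pi.single i 1) j - L (Pi.single j 1) i) := by
        rw [hAx, hAx, hAx, hA, hA, hA, hA, hA, hA]
    _ = 0 := key
end

section
/- Let n ≥ 1 and 1 ≤ l ≤ n−1, and let f be the Morse quadratic of index l on ℝⁿ. Then for every real number c > 0, the level set f⁻¹(c) is homeomorphic to the product B^l × S^{n−l−1} of the open unit ball in ℝ^l with the unit sphere in ℝ^{n−l}. -/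
open Metric


/-- The Morse quadratic of index `l` on `ℝⁿ`:
`f(x) = -x₁² - ⋯ - x_l² + x_{l+1}² + ⋯ + x_n²`. -/
noncomputable def morseQuadratic (n l : ℕ) : EuclideanSpace ℝ (Fin n) → ℝ :=
  fun x => ∑ i : Fin n, (if (i : ℕ) < l then -(x i) ^ 2 else (x i) ^ 2)

lemma eucl_norm_sq {k : ℕ} (y : EuclideanSpace ℝ (Fin k)) :
    ‖y‖ ^ 2 = ∑ i, (y i) ^ 2 := by
  rw [EuclideanSpace.norm_eq, Real.sq_sqrt (by positivity)]
  simp [sq_abs]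

noncomputable def splitHomeo {n l : ℕ} (hln : l ≤ n) :
    EuclideanSpace ℝ (Fin n) ≃ₜ
      EuclideanSpace ℝ (Fin l) × EuclideanSpace ℝ (Fin (n - l)) where
  toFun x := (WithLp.toLp 2 (fun i => x (Fin.castLE hln i)),
    WithLp.toLp 2 (fun j => x ⟨l + j, by have := j.isLt; omega⟩))
  invFun p := WithLp.toLp 2 fun i =>
    if h : (i : ℕ) < l then p.1 ⟨i, h⟩ else p.2 ⟨(i : ℕ) - l, by have := i.isLt; omega⟩
  left_inv x := by
    ext i
    by_cases h : (i : ℕ) < l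
    · simp only [PiLp.toLp_apply, dif_pos h]
      rfl
    · simp only [PiLp.toLp_apply, dif_neg h]
      refine congrArg x.ofLp ?_
      apply Fin.ext
      show l + ((i : ℕ) - l) = (i : ℕ)
      omega
  right_inv p := by
    refine Prod.ext ?_ ?_
    · ext i
      simp only [PiLp.toLp_apply, Fin.coe_castLE, i.isLt, dif_pos]
    · ext j
      have h : ¬ (l + (j : ℕ) < l) := by omega
      simp only [PiLp.toLp_apply, dif_neg h]
      exact congrArg p.2 (Fin.ext (show l + (j : ℕ) - l = (j : ℕ) by omega))
  continuous_toFun := by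
    apply Continuous.prodMk
    · exact (PiLp.continuous_toLp 2 _).comp (continuous_pi fun i => PiLp.continuous_apply ..)
    · exact (PiLp.continuous_toLp 2 _).comp (continuous_pi fun j => PiLp.continuous_apply ..)
  continuous_invFun := by
    apply (PiLp.continuous_toLp 2 _).comp
    apply continuous_pi
    intro i
    by_cases h : (i : ℕ) < l
    · simp only [dif_pos h]
      exact (PiLp.continuous_apply ..).comp continuous_fst
    · simp only [dif_neg h]
      exact (PiLp.continuous_apply ..).comp continuous_snd

lemma morse_eq {n l : ℕ} (hln : l ≤ n) (x : EuclideanSpace ℝ (Fin n)) :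
    morseQuadratic n l x
      = ‖(splitHomeo hln x).2‖ ^ 2 - ‖(splitHomeo hln x).1‖ ^ 2 := by
  rw [eucl_norm_sq, eucl_norm_sq]
  have hsum : l + (n - l) = n := by omega
  set g : Fin n → ℝ := fun i => if (i : ℕ) < l then -(x i) ^ 2 else (x i) ^ 2 with hg
  let eqv : Fin l ⊕ Fin (n - l) ≃ Fin n := finSumFinEquiv.trans (finCongr hsum)
  have h0 : morseQuadratic n l x = ∑ s : Fin l ⊕ Fin (n - l), g (eqv s) :=
    (Equiv.sum_comp eqv g).symm
  rw [h0, Fintype.sum_sum_type]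
  have h1 : ∀ i : Fin l, g (eqv (Sum.inl i)) = -(x (Fin.castLE hln i)) ^ 2 := by
    intro i
    have he : eqv (Sum.inl i) = Fin.castLE hln i := by
      apply Fin.ext
      simp [eqv, finSumFinEquiv]
    rw [he, hg]
    simp [i.isLt]
  have h2 : ∀ j : Fin (n - l), g (eqv (Sum.inr j)) =
      (x ⟨l + j, by have := j.isLt; omega⟩) ^ 2 := by
    intro j
    have he : eqv (Sum.inr j) = (⟨l + j, by have := j.isLt; omega⟩ : Fin n) := by
      apply Fin.ext
      simp [eqv, finSumFinEquiv]
    rw [he, hg]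
    simp
  simp only [h1, h2, Finset.sum_neg_distrib]
  simp only [splitHomeo, Homeomorph.homeomorph_mk_coe, Equiv.coe_fn_mk, PiLp.toLp_apply]
  ring

noncomputable def sphereParam (l m : ℕ) (c : ℝ) (hc : 0 < c) :
    {p : EuclideanSpace ℝ (Fin l) × EuclideanSpace ℝ (Fin m) | ‖p.2‖ ^ 2 = c + ‖p.1‖ ^ 2}
      ≃ₜ EuclideanSpace ℝ (Fin l) × Metric.sphere (0 : EuclideanSpace ℝ (Fin m)) 1 := by
  have hpos : ∀ p : {p : EuclideanSpace ℝ (Fin l) × EuclideanSpace ℝ (Fin m) |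
      ‖p.2‖ ^ 2 = c + ‖p.1‖ ^ 2}, 0 < ‖p.val.2‖ := by
    intro p
    have hp : ‖p.val.2‖ ^ 2 = c + ‖p.val.1‖ ^ 2 := p.2
    nlinarith [norm_nonneg p.val.2, norm_nonneg p.val.1]
  exact {
    toFun := fun p => (p.val.1, ⟨‖p.val.2‖⁻¹ • p.val.2, by
      rw [mem_sphere_zero_iff_norm, norm_smul, norm_inv, norm_norm]
      exact inv_mul_cancel₀ (hpos p).ne'⟩)
    invFun := fun q => ⟨(q.1, Real.sqrt (c + ‖q.1‖ ^ 2) • (q.2 : EuclideanSpace ℝ (Fin m))), by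
      have hs : ‖(q.2 : EuclideanSpace ℝ (Fin m))‖ = 1 := mem_sphere_zero_iff_norm.mp q.2.2
      have hnn : (0:ℝ) ≤ c + ‖q.1‖ ^ 2 := by positivity
      show ‖_‖ ^ 2 = _
      rw [norm_smul, hs, mul_one, Real.norm_eq_abs,
        abs_of_nonneg (Real.sqrt_nonneg _), Real.sq_sqrt hnn]⟩
    left_inv := fun p => by
      dsimp only
      apply Subtype.ext
      refine Prod.ext_iff.mpr ⟨rfl, ?_⟩
      show Real.sqrt (c + ‖p.val.1‖ ^ 2) • (‖p.val.2‖⁻¹ • p.val.2) = p.val.2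
      have hp : ‖p.val.2‖ ^ 2 = c + ‖p.val.1‖ ^ 2 := p.2
      rw [← hp, Real.sqrt_sq (norm_nonneg _), smul_smul,
        mul_inv_cancel₀ (hpos p).ne', one_smul]
    right_inv := fun q => by
      dsimp only
      have hs : ‖(q.2 : EuclideanSpace ℝ (Fin m))‖ = 1 := mem_sphere_zero_iff_norm.mp q.2.2
      have hr : (0:ℝ) < Real.sqrt (c + ‖q.1‖ ^ 2) := Real.sqrt_pos.mpr (by positivity)
      refine Prod.ext_iff.mpr ⟨rfl, ?_⟩
      apply Subtype.ext
      show ‖Real.sqrt (c + ‖q.1‖ ^ 2) • (q.2 : EuclideanSpace ℝ (Fin m))‖⁻¹ •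
        (Real.sqrt (c + ‖q.1‖ ^ 2) • (q.2 : EuclideanSpace ℝ (Fin m)))
          = (q.2 : EuclideanSpace ℝ (Fin m))
      rw [norm_smul, hs, mul_one, Real.norm_eq_abs, abs_of_pos hr, smul_smul,
        inv_mul_cancel₀ hr.ne', one_smul]
    continuous_toFun := by
      have hv : Continuous fun p : {p : EuclideanSpace ℝ (Fin l) × EuclideanSpace ℝ (Fin m) |
          ‖p.2‖ ^ 2 = c + ‖p.1‖ ^ 2} => p.val.2 := continuous_snd.comp continuous_subtype_val
      exact (continuous_fst.comp continuous_subtype_val).prodMk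
        (((hv.norm.inv₀ fun p => (hpos p).ne').smul hv).subtype_mk _)
    continuous_invFun := by
      apply Continuous.subtype_mk
      exact continuous_fst.prodMk
        ((Real.continuous_sqrt.comp (continuous_const.add (continuous_fst.norm.pow 2))).smul
          (continuous_subtype_val.comp continuous_snd)) }

/-- for `c > 0`, the level set `f⁻¹(c)` of the Morse quadratic of index
`l` (`1 ≤ l ≤ n-1`) is homeomorphic to `B^l × S^{n-l-1}`. -/
theorem morse_level_pos_homeomorph_ball_prod_sphere
    (n l : ℕ) (hn : 1 ≤ n) (hl1 : 1 ≤ l) (hl2 : l ≤ n - 1) (c : ℝ) (hc : 0 < c) :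
    Nonempty ((morseQuadratic n l ⁻¹' {c}) ≃ₜ
      (Metric.ball (0 : EuclideanSpace ℝ (Fin l)) 1) ×
        (Metric.sphere (0 : EuclideanSpace ℝ (Fin (n - l))) 1)) := by
  have hln : l ≤ n := by omega
  have hset : ⇑(splitHomeo (n := n) (l := l) hln) '' (morseQuadratic n l ⁻¹' {c})
      = {p : EuclideanSpace ℝ (Fin l) × EuclideanSpace ℝ (Fin (n - l)) |
          ‖p.2‖ ^ 2 = c + ‖p.1‖ ^ 2} := by
    rw [show ⇑(splitHomeo (n := n) (l := l) hln)
      = ⇑(splitHomeo (n := n) (l := l) hln).toEquiv from rfl, Equiv.image_eq_preimage_symm]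
    ext p
    simp only [Set.mem_preimage, Set.mem_singleton_iff, Set.mem_setOf_eq]
    rw [morse_eq hln]
    simp only [Equiv.apply_symm_apply, Homeomorph.apply_symm_apply,
      Homeomorph.coe_toEquiv, Homeomorph.coe_symm_toEquiv]
    constructor <;> intro h <;> linarith
  exact ⟨(((splitHomeo hln).image _).trans (Homeomorph.setCongr hset)).trans
    ((sphereParam l (n - l) c hc).trans
      ((Homeomorph.unitBall).prodCongr (Homeomorph.refl _)))⟩
end

section
/- Let n ≥ 1 and 1 ≤ l ≤ n−1, and let f be the Morse quadratic of index l on ℝⁿ. Then for every real number c < 0, the level set f⁻¹(c) is homeomorphic to the product B^{n−l} × S^{l−1} of the open unit ball in ℝ^{n−l} with the unit sphere in ℝ^{l}. -/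
section aux

lemma euc_norm_sq {m : ℕ} (y : EuclideanSpace ℝ (Fin m)) : ‖y‖ ^ 2 = ∑ j, (y j) ^ 2 := by
  rw [EuclideanSpace.norm_eq, Real.sq_sqrt (by positivity)]
  simp [sq_abs]

lemma euc_apply_cont {m : ℕ} (i : Fin m) :
    Continuous fun x : EuclideanSpace ℝ (Fin m) => x i := (continuous_apply i).comp (PiLp.continuous_ofLp ..)

variable (n l : ℕ) (hln : l < n) (c : ℝ)

/-- sum of squares of the first `l` coordinates -/
noncomputable def mlR (x : EuclideanSpace ℝ (Fin n)) : ℝ :=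
  ∑ i : Fin l, (x ⟨i, i.isLt.trans hln⟩) ^ 2

/-- projection to last `n - l` coordinates -/
noncomputable def mlV (x : EuclideanSpace ℝ (Fin n)) : EuclideanSpace ℝ (Fin (n - l)) :=
  WithLp.toLp 2 fun j : Fin (n - l) => x ⟨l + j, by have := j.isLt; omega⟩

/-- normalized first `l` coordinates -/
noncomputable def mlW (x : EuclideanSpace ℝ (Fin n)) : EuclideanSpace ℝ (Fin l) :=
  WithLp.toLp 2 fun i : Fin l => x ⟨i, i.isLt.trans hln⟩ / Real.sqrt (mlR n l hln x)

/-- the inverse map -/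
noncomputable def mlPsi (p : EuclideanSpace ℝ (Fin (n - l)) × EuclideanSpace ℝ (Fin l)) :
    EuclideanSpace ℝ (Fin n) :=
  WithLp.toLp 2 fun k : Fin n => if h : (k : ℕ) < l then Real.sqrt (‖p.1‖ ^ 2 - c) * p.2 ⟨k, h⟩
    else p.1 ⟨(k : ℕ) - l, by have := k.isLt; omega⟩

lemma morseQuadratic_split (x : EuclideanSpace ℝ (Fin n)) :
    morseQuadratic n l x = -(mlR n l hln x) + ∑ j : Fin (n - l), (mlV n l hln x j) ^ 2 := by
  have hnl : l + (n - l) = n := by omega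
  unfold morseQuadratic mlR mlV
  rw [← (finCongr hnl).sum_comp (fun i : Fin n => if (i : ℕ) < l then -(x i) ^ 2 else (x i) ^ 2)]
  rw [Fin.sum_univ_add]
  congr 1
  · rw [← Finset.sum_neg_distrib]
    apply Finset.sum_congr rfl
    intro i _
    rw [if_pos (show ((finCongr hnl (Fin.castAdd (n - l) i)) : ℕ) < l from i.isLt)]
    exact congrArg (fun t => -(x t) ^ 2) (Fin.ext rfl)
  · apply Finset.sum_congr rfl
    intro j _
    have hv : ((finCongr hnl (Fin.natAdd l j)) : ℕ) = l + (j : ℕ) := rfl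
    rw [if_neg (by rw [hv]; omega)]
    exact congrArg (fun t => (x t) ^ 2) (Fin.ext rfl)

lemma mlR_continuous : Continuous (mlR n l hln) := by
  unfold mlR
  exact continuous_finset_sum _ fun i _ => (euc_apply_cont _).pow 2

lemma mlV_continuous : Continuous (mlV n l hln) := by
  unfold mlV
  exact (PiLp.continuous_toLp ..).comp (continuous_pi fun j => euc_apply_cont _)

lemma mlPsi_continuous : Continuous (mlPsi n l hln c) := by
  unfold mlPsi
  apply (PiLp.continuous_toLp ..).comp
  apply continuous_pi
  intro k
  by_cases h : (k : ℕ) < l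
  · simp only [dif_pos h]
    exact (((continuous_fst.norm.pow 2).sub continuous_const).sqrt).mul
      ((euc_apply_cont _).comp continuous_snd)
  · simp only [dif_neg h]
    exact (euc_apply_cont _).comp continuous_fst

end aux

/-- for `c < 0`, the level set `f⁻¹(c)` of the Morse quadratic of index
`l` (`1 ≤ l ≤ n-1`) is homeomorphic to `B^{n-l} × S^{l-1}`. -/
theorem morse_level_neg_homeomorph_ball_prod_sphere
    (n l : ℕ) (hn : 1 ≤ n) (hl1 : 1 ≤ l) (hl2 : l ≤ n - 1) (c : ℝ) (hc : c < 0) :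
    Nonempty ((morseQuadratic n l ⁻¹' {c}) ≃ₜ
      (Metric.ball (0 : EuclideanSpace ℝ (Fin (n - l))) 1) ×
        (Metric.sphere (0 : EuclideanSpace ℝ (Fin l)) 1)) := by
  have hln : l < n := by omega
  set S := morseQuadratic n l ⁻¹' {c} with hS
  -- basic facts
  have hR : ∀ x ∈ S, mlR n l hln x = ‖mlV n l hln x‖ ^ 2 - c := by
    intro x hx
    have hx' : morseQuadratic n l x = c := hx
    rw [morseQuadratic_split n l hln x] at hx'
    rw [euc_norm_sq]
    linarith
  have hRpos : ∀ x ∈ S, 0 < mlR n l hln x := by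
    intro x hx
    rw [hR x hx]
    nlinarith [sq_nonneg ‖mlV n l hln x‖]
  have hWsphere : ∀ x ∈ S, ‖mlW n l hln x‖ = 1 := by
    intro x hx
    have hpos := hRpos x hx
    have h2 : ‖mlW n l hln x‖ ^ 2 = 1 := by
      rw [euc_norm_sq]
      unfold mlW
      simp only [PiLp.toLp_apply]
      have key : ∀ i : Fin l, (x ⟨(i : ℕ), i.isLt.trans hln⟩ / Real.sqrt (mlR n l hln x)) ^ 2
          = (x ⟨(i : ℕ), i.isLt.trans hln⟩) ^ 2 / mlR n l hln x := by
        intro i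
        rw [div_pow, Real.sq_sqrt hpos.le]
      rw [Finset.sum_congr rfl fun i _ => key i, ← Finset.sum_div]
      exact div_self hpos.ne'
    rw [← Real.sqrt_one, ← h2, Real.sqrt_sq (norm_nonneg _)]
  have hA : ∀ v : EuclideanSpace ℝ (Fin (n - l)), 0 < ‖v‖ ^ 2 - c := by
    intro v; nlinarith [sq_nonneg ‖v‖]
  -- behaviour of Psi
  have keyPsi : ∀ (p : EuclideanSpace ℝ (Fin (n - l)) × EuclideanSpace ℝ (Fin l)) (i : Fin l),
      mlPsi n l hln c p ⟨(i : ℕ), i.isLt.trans hln⟩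
        = Real.sqrt (‖p.1‖ ^ 2 - c) * p.2 i := by
    intro p i
    unfold mlPsi
    simp only [PiLp.toLp_apply]
    rw [dif_pos (show (((⟨(i : ℕ), i.isLt.trans hln⟩ : Fin n)) : ℕ) < l from i.isLt)]
  have hRPsi : ∀ p : EuclideanSpace ℝ (Fin (n - l)) × EuclideanSpace ℝ (Fin l), ‖p.2‖ = 1 →
      mlR n l hln (mlPsi n l hln c p) = ‖p.1‖ ^ 2 - c := by
    intro p hp
    unfold mlR
    rw [Finset.sum_congr rfl fun i _ => by rw [keyPsi p i]]
    rw [Finset.sum_congr rfl fun i _ => mul_pow _ _ 2, ← Finset.mul_sum,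
      Real.sq_sqrt (hA p.1).le, ← euc_norm_sq, hp]
    ring
  have hVPsi : ∀ p : EuclideanSpace ℝ (Fin (n - l)) × EuclideanSpace ℝ (Fin l),
      mlV n l hln (mlPsi n l hln c p) = p.1 := by
    intro p
    ext j
    show mlPsi n l hln c p ⟨l + (j : ℕ), by have := j.isLt; omega⟩ = p.1 j
    unfold mlPsi
    simp only [PiLp.toLp_apply]
    rw [dif_neg (show ¬ (((⟨l + (j : ℕ), by have := j.isLt; omega⟩ : Fin n)) : ℕ) < l by
      simp)]
    exact congrArg p.1 (Fin.ext (by simp))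
  have hPsiMem : ∀ p : EuclideanSpace ℝ (Fin (n - l)) × EuclideanSpace ℝ (Fin l), ‖p.2‖ = 1 →
      mlPsi n l hln c p ∈ S := by
    intro p hp
    have : morseQuadratic n l (mlPsi n l hln c p) = c := by
      rw [morseQuadratic_split n l hln, hRPsi p hp]
      have h1 : ∑ j, (mlV n l hln (mlPsi n l hln c p) j) ^ 2 = ‖p.1‖ ^ 2 := by
        rw [hVPsi p, euc_norm_sq]
      rw [h1]; ring
    exact this
  -- the two maps
  let F : S → (EuclideanSpace ℝ (Fin (n - l))) × (Metric.sphere (0 : EuclideanSpace ℝ (Fin l)) 1) :=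
    fun p => (mlV n l hln p.1, ⟨mlW n l hln p.1, by
      rw [mem_sphere_zero_iff_norm]; exact hWsphere p.1 p.2⟩)
  let G : (EuclideanSpace ℝ (Fin (n - l))) × (Metric.sphere (0 : EuclideanSpace ℝ (Fin l)) 1) → S :=
    fun q => ⟨mlPsi n l hln c (q.1, q.2.1), hPsiMem (q.1, q.2.1)
      (mem_sphere_zero_iff_norm.mp q.2.2)⟩
  have hGF : ∀ p, G (F p) = p := by
    intro ⟨x, hx⟩
    apply Subtype.ext
    ext k
    show mlPsi n l hln c (mlV n l hln x, mlW n l hln x) k = x k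
    unfold mlPsi
    simp only [PiLp.toLp_apply]
    by_cases h : (k : ℕ) < l
    · rw [dif_pos h]
      show Real.sqrt (‖mlV n l hln x‖ ^ 2 - c) * mlW n l hln x ⟨(k : ℕ), h⟩ = x k
      unfold mlW
      simp only [PiLp.toLp_apply]
      have hrx : ‖mlV n l hln x‖ ^ 2 - c = mlR n l hln x := by rw [hR x hx]
      rw [hrx]
      have hs : Real.sqrt (mlR n l hln x) ≠ 0 := (Real.sqrt_pos.mpr (hRpos x hx)).ne'
      have hxx : x ⟨((⟨(k : ℕ), h⟩ : Fin l) : ℕ), (Fin.mk (k : ℕ) h).isLt.trans hln⟩ = x k :=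
        congrArg x (Fin.ext rfl)
      rw [hxx]
      field_simp
    · rw [dif_neg h]
      show mlV n l hln x ⟨(k : ℕ) - l, _⟩ = x k
      unfold mlV
      exact congrArg x (Fin.ext (by simp; omega))
  have hFG : ∀ q, F (G q) = q := by
    intro ⟨v, w, hw⟩
    have hw' : ‖w‖ = 1 := mem_sphere_zero_iff_norm.mp hw
    apply Prod.ext
    · exact hVPsi (v, w)
    · apply Subtype.ext
      show mlW n l hln (mlPsi n l hln c (v, w)) = w
      ext i
      unfold mlW
      simp only [PiLp.toLp_apply]
      rw [hRPsi (v, w) hw', keyPsi (v, w) i]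
      have hs : Real.sqrt (‖v‖ ^ 2 - c) ≠ 0 := (Real.sqrt_pos.mpr (hA v)).ne'
      show Real.sqrt (‖v‖ ^ 2 - c) * w i / Real.sqrt (‖v‖ ^ 2 - c) = w i
      field_simp
  have hFcont : Continuous F := by
    apply Continuous.prodMk
    · exact (mlV_continuous n l hln).comp continuous_subtype_val
    · apply Continuous.subtype_mk
      apply (PiLp.continuous_toLp ..).comp
      apply continuous_pi
      intro i
      show Continuous fun p : S => (p : EuclideanSpace ℝ (Fin n)) ⟨(i : ℕ), i.isLt.trans hln⟩
        / Real.sqrt (mlR n l hln p)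
      apply Continuous.div
      · exact (euc_apply_cont _).comp continuous_subtype_val
      · exact ((mlR_continuous n l hln).comp continuous_subtype_val).sqrt
      · intro p
        exact (Real.sqrt_pos.mpr (hRpos p.1 p.2)).ne'
  have hGcont : Continuous G := by
    apply Continuous.subtype_mk
    exact (mlPsi_continuous n l hln c).comp
      (continuous_fst.prodMk (continuous_subtype_val.comp continuous_snd))
  let e1 : S ≃ₜ (EuclideanSpace ℝ (Fin (n - l))) ×
      (Metric.sphere (0 : EuclideanSpace ℝ (Fin l)) 1) :=
    ⟨⟨F, G, hGF, hFG⟩, hFcont, hGcont⟩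
  exact ⟨e1.trans (Homeomorph.prodCongr Homeomorph.unitBall (Homeomorph.refl _))⟩
end

section
/- Let n ≥ 1, let f : ℝⁿ → ℝ be a continuous convex function, let p ∈ ℝⁿ and c ∈ ℝ with f(p) < c, and suppose the sublevel set K = {x ∈ ℝⁿ : f(x) ≤ c} is compact. Then the level set f⁻¹({c}) is homeomorphic to the unit sphere S^{n−1} in ℝⁿ. -/
/-- if `f : ℝⁿ → ℝ` is continuous and convex, `f(p) < c`, and the
sublevel set `{f ≤ c}` is compact, then the level set `f⁻¹(c)` is homeomorphic to the
unit sphere `S^{n-1}` of `ℝⁿ`. -/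
theorem convex_level_set_homeomorph_sphere
    (n : ℕ) (hn : 1 ≤ n) (f : EuclideanSpace ℝ (Fin n) → ℝ)
    (hcont : Continuous f) (hconv : ConvexOn ℝ Set.univ f)
    (p : EuclideanSpace ℝ (Fin n)) (c : ℝ) (hpc : f p < c)
    (hcpt : IsCompact {x : EuclideanSpace ℝ (Fin n) | f x ≤ c}) :
    Nonempty ((f ⁻¹' {c}) ≃ₜ (Metric.sphere (0 : EuclideanSpace ℝ (Fin n)) 1)) := by
  haveI : Nonempty (Fin n) := ⟨⟨0, hn⟩⟩
  set K : Set (EuclideanSpace ℝ (Fin n)) := {x | f x ≤ c} with hK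
  have hKconv : Convex ℝ K := by
    have := hconv.convex_le c
    simpa using this
  have hKclosed : IsClosed K := isClosed_le hcont continuous_const
  have hopen : IsOpen {x | f x < c} := isOpen_lt hcont continuous_const
  have hsub : {x | f x < c} ⊆ K := fun x hx => Set.mem_setOf_eq ▸ le_of_lt hx
  have hint : ∀ x, x ∈ interior K ↔ f x < c := by
    intro x
    constructor
    · intro hx
      by_contra h
      push_neg at h
      have hxK' : x ∈ K := interior_subset hx
      have hxK : f x ≤ c := by simpa [hK] using hxK'
      have hfx : f x = c := le_antisymm hxK h
      -- find y = x + ε (x - p) in K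
      have hmem : ∀ᶠ t in nhds (1 : ℝ), (1 - t) • p + t • x ∈ interior K := by
        have hc : Continuous fun t : ℝ => (1 - t) • p + t • x := by continuity
        have : (fun t : ℝ => (1 - t) • p + t • x) ⁻¹' interior K ∈ nhds 1 := by
          apply (isOpen_interior.preimage hc).mem_nhds
          simpa using hx
        exact this
      obtain ⟨t, ht1, htmem⟩ := hmem.exists_gt
      set y := (1 - t) • p + t • x with hy
      have hyK' : y ∈ K := interior_subset htmem
      have hyK : f y ≤ c := by simpa [hK] using hyK'
      -- x is a convex combination of p and y: x = ((t-1)/t) p + (1/t) y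
      have htpos : (0:ℝ) < t := lt_trans one_pos ht1
      have hxcomb : x = ((t - 1)/t) • p + (1/t) • y := by
        rw [hy, smul_add, smul_smul, smul_smul, ← add_assoc, ← add_smul]
        have h1 : (t - 1)/t + 1/t * (1 - t) = 0 := by field_simp; ring
        have h2 : (1:ℝ)/t * t = 1 := by field_simp
        rw [h1, h2, zero_smul, zero_add, one_smul]
      have hsum : (t - 1)/t + 1/t = 1 := by field_simp; ring
      have hconvx := hconv.2 (Set.mem_univ p) (Set.mem_univ y)
        (div_nonneg (by linarith) htpos.le) (div_nonneg zero_le_one htpos.le) hsum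
      rw [← hxcomb] at hconvx
      have : f x < ((t-1)/t) * c + (1/t) * c := by
        calc f x ≤ ((t-1)/t) • f p + (1/t) • f y := hconvx
        _ < ((t-1)/t) * c + (1/t) * c := by
            have h1 : ((t-1)/t) * f p < ((t-1)/t) * c := by
              apply mul_lt_mul_of_pos_left hpc (div_pos (by linarith) htpos)
            have h2 : (1/t) * f y ≤ (1/t) * c := by
              apply mul_le_mul_of_nonneg_left hyK (by positivity)
            simp only [smul_eq_mul]
            linarith
      have heq : ((t-1)/t) * c + (1/t) * c = c := by field_simp; ring
      rw [heq, hfx] at this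
      exact lt_irrefl _ this
    · intro hx
      exact interior_maximal hsub hopen hx
  have hfront : frontier K = f ⁻¹' {c} := by
    rw [hKclosed.frontier_eq]
    ext x
    simp only [Set.mem_diff, Set.mem_preimage, Set.mem_singleton_iff, hint x, hK,
      Set.mem_setOf_eq]
    constructor
    · rintro ⟨h1, h2⟩; have h2' := fun h => h2 ((hint x).mpr h); linarith [not_lt.mp h2']
    · intro h; exact ⟨h.le, fun hi => by have := (hint x).mp hi; linarith⟩
  have hne : (interior K).Nonempty := ⟨p, (hint p).mpr hpc⟩
  obtain ⟨h, -, -, hfr⟩ := exists_homeomorph_image_interior_closure_frontier_eq_unitBall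
    hKconv hne hcpt.isBounded
  rw [hfront] at hfr
  exact ⟨(Homeomorph.image h (f ⁻¹' {c})).trans (Homeomorph.setCongr hfr)⟩
end
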